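/- Let (Ω, F, P) be a probability space, ρ ∈ (0,1), α > 0. Let v_t : Ω → ℝ (t ∈ ℕ₀) be nonnegative random variables and let k_n : Ω → ℕ₀ (n ∈ ℕ₀) be random variables such that almost surely (k_n) is strictly increasing with k_0 = 0 and (v_t) is a cycle-Lyapunov sequence for (ρ, α, (k_n)). Suppose v_0 is independent of the σ-algebra generated by (Δ_n)_{n≥1} and E[v_0] < ∞. If there exists Ω' < 1 such that E[Ξ(1)] < ∞ and E[Ξ(n+1)] ≤ Ω' · E[Ξ(n)] for every n ≥ 1, then Σ_{t=0}^{∞} E[v_t] < ∞. -/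

import Mathlib

open MeasureTheory
open scoped ENNReal

/-- `v : ℕ → ℝ` is a cycle-Lyapunov sequence for `(ρ, α, k)`: it is nonnegative, satisfies
`v (k n + 1) ≤ α * v (k n)` at the start of each cycle, and contracts by `ρ` at every step
`t` with `k n + 1 ≤ t ≤ k (n+1) - 1` within a cycle. -/
def IsCycleLyapunov (ρ α : ℝ) (k : ℕ → ℕ) (v : ℕ → ℝ) : Prop :=
  (∀ t, 0 ≤ v t) ∧
  (∀ n, v (k n + 1) ≤ α * v (k n)) ∧
  (∀ n t, k n + 1 ≤ t → t < k (n + 1) → v (t + 1) ≤ ρ * v t)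

/-- `Ξ(n) = α^n · ρ^{Σ_{i=1}^{n} (Δ_i − 1)}` where `Δ_i = k i − k (i−1)`; in particular
`Ξ(0) = 1` (empty sum). -/
noncomputable def Xi (ρ α : ℝ) (k : ℕ → ℕ) (n : ℕ) : ℝ :=
  α ^ n * ρ ^ (∑ i ∈ Finset.range n, (k (i + 1) - k i - 1))

lemma cycle_step {ρ α : ℝ} (hρ0 : 0 ≤ ρ) {k : ℕ → ℕ} {v : ℕ → ℝ}
    (hv : IsCycleLyapunov ρ α k v) :
    ∀ n j, k n + 1 + j ≤ k (n + 1) → v (k n + 1 + j) ≤ ρ ^ j * (α * v (k n)) := by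
  intro n j
  induction j with
  | zero => intro _; simpa using hv.2.1 n
  | succ j ih =>
    intro hle
    have h1 : v (k n + 1 + j + 1) ≤ ρ * v (k n + 1 + j) :=
      hv.2.2 n (k n + 1 + j) (by omega) (by omega)
    have h2 : v (k n + 1 + j) ≤ ρ ^ j * (α * v (k n)) := ih (by omega)
    have : k n + 1 + (j + 1) = k n + 1 + j + 1 := by omega
    rw [this]
    calc v (k n + 1 + j + 1) ≤ ρ * v (k n + 1 + j) := h1
      _ ≤ ρ * (ρ ^ j * (α * v (k n))) := by
          exact mul_le_mul_of_nonneg_left h2 hρ0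
      _ = ρ ^ (j + 1) * (α * v (k n)) := by ring

lemma Xi_nonneg {ρ α : ℝ} (hρ0 : 0 ≤ ρ) (hα : 0 ≤ α) (k : ℕ → ℕ) (n : ℕ) :
    0 ≤ Xi ρ α k n := mul_nonneg (pow_nonneg hα n) (pow_nonneg hρ0 _)

lemma vk_le {ρ α : ℝ} (hρ0 : 0 ≤ ρ) (hα : 0 ≤ α) {k : ℕ → ℕ} {v : ℕ → ℝ}
    (hk : StrictMono k) (hk0 : k 0 = 0) (hv : IsCycleLyapunov ρ α k v) :
    ∀ n, v (k n) ≤ Xi ρ α k n * v 0 := by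
  intro n
  induction n with
  | zero => simp [Xi, hk0]
  | succ n ih =>
    have hlt : k n < k (n + 1) := hk (Nat.lt_succ_self n)
    have hj : k n + 1 + (k (n + 1) - k n - 1) = k (n + 1) := by omega
    have h1 := cycle_step hρ0 hv n (k (n + 1) - k n - 1) (by omega)
    rw [hj] at h1
    have h2 : ρ ^ (k (n + 1) - k n - 1) * (α * v (k n)) ≤
        ρ ^ (k (n + 1) - k n - 1) * (α * (Xi ρ α k n * v 0)) := by
      apply mul_le_mul_of_nonneg_left _ (pow_nonneg hρ0 _)
      exact mul_le_mul_of_nonneg_left ih hα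
    refine h1.trans (h2.trans_eq ?_)
    rw [Xi, Xi, Finset.sum_range_succ, pow_add, pow_succ]
    ring

lemma exists_cycle {k : ℕ → ℕ} (hk : StrictMono k) (hk0 : k 0 = 0) (t : ℕ) :
    ∃ n, k n ≤ t ∧ t < k (n + 1) := by
  have hex : ∃ m, t < k m := ⟨t + 1, lt_of_lt_of_le (Nat.lt_succ_self t) hk.le_apply⟩
  have hN0 : Nat.find hex ≠ 0 := by
    intro h
    have := Nat.find_spec hex
    rw [h, hk0] at this
    omega
  refine ⟨Nat.find hex - 1, ?_, ?_⟩
  · have := Nat.find_min hex (m := Nat.find hex - 1) (by omega)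
    omega
  · have heq : Nat.find hex - 1 + 1 = Nat.find hex := by omega
    rw [heq]
    exact Nat.find_spec hex

lemma pointwise_sum_le {ρ α : ℝ} (hρ0 : 0 < ρ) (hρ1 : ρ < 1) (hα : 0 < α)
    {k : ℕ → ℕ} {v : ℕ → ℝ} (hk : StrictMono k) (hk0 : k 0 = 0)
    (hv : IsCycleLyapunov ρ α k v) :
    ∑' t, ENNReal.ofReal (v t) ≤ ENNReal.ofReal (v 0) +
      ((∑' j : ℕ, ENNReal.ofReal ρ ^ j) * ENNReal.ofReal α) *
        ∑' n, ENNReal.ofReal (Xi ρ α k n) * ENNReal.ofReal (v 0) := by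
  rw [tsum_eq_zero_add' ENNReal.summable]
  refine add_le_add le_rfl ?_
  set g : ℕ × ℕ → ℝ≥0∞ := fun p =>
    ENNReal.ofReal ρ ^ p.2 * (ENNReal.ofReal α *
      (ENNReal.ofReal (Xi ρ α k p.1) * ENNReal.ofReal (v 0))) with hg
  choose nidx hn1 hn2 using fun t => exists_cycle hk hk0 t
  set f : ℕ → ℕ × ℕ := fun t => (nidx t, t - k (nidx t)) with hf
  have hinj : Function.Injective f := by
    intro a b hab
    have e1 : nidx a = nidx b := congrArg Prod.fst hab
    have e2 : a - k (nidx a) = b - k (nidx b) := congrArg Prod.snd hab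
    have ha := hn1 a
    have hb := hn1 b
    rw [e1] at e2 ha
    omega
  have hbound : ∀ t, ENNReal.ofReal (v (t + 1)) ≤ g (f t) := by
    intro t
    have hs1 := hn1 t
    have hs2 := hn2 t
    have ht1 : t + 1 = k (nidx t) + 1 + (t - k (nidx t)) := by omega
    have h1 : v (t + 1) ≤ ρ ^ (t - k (nidx t)) * (α * v (k (nidx t))) := by
      rw [ht1]; exact cycle_step hρ0.le hv (nidx t) (t - k (nidx t)) (by omega)
    have h2 : v (t + 1) ≤ ρ ^ (t - k (nidx t)) * (α * (Xi ρ α k (nidx t) * v 0)) := by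
      refine h1.trans ?_
      apply mul_le_mul_of_nonneg_left _ (pow_nonneg hρ0.le _)
      exact mul_le_mul_of_nonneg_left (vk_le hρ0.le hα.le hk hk0 hv (nidx t)) hα.le
    calc ENNReal.ofReal (v (t + 1))
        ≤ ENNReal.ofReal (ρ ^ (t - k (nidx t)) * (α * (Xi ρ α k (nidx t) * v 0))) :=
          ENNReal.ofReal_le_ofReal h2
      _ = g (f t) := by
          rw [hg, hf]
          simp only
          rw [ENNReal.ofReal_mul (pow_nonneg hρ0.le _),
            ENNReal.ofReal_mul hα.le,
            ENNReal.ofReal_mul (Xi_nonneg hρ0.le hα.le k (nidx t)),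
            ENNReal.ofReal_pow hρ0.le]
  calc ∑' t, ENNReal.ofReal (v (t + 1)) ≤ ∑' t, g (f t) := ENNReal.tsum_le_tsum hbound
    _ ≤ ∑' p, g p := ENNReal.tsum_comp_le_tsum_of_injective hinj g
    _ = ∑' n, ∑' j : ℕ, ENNReal.ofReal ρ ^ j * (ENNReal.ofReal α *
        (ENNReal.ofReal (Xi ρ α k n) * ENNReal.ofReal (v 0))) :=
      ENNReal.tsum_prod (f := fun n j => ENNReal.ofReal ρ ^ j * (ENNReal.ofReal α *
        (ENNReal.ofReal (Xi ρ α k n) * ENNReal.ofReal (v 0))))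
    _ = ((∑' j : ℕ, ENNReal.ofReal ρ ^ j) * ENNReal.ofReal α) *
        ∑' n, ENNReal.ofReal (Xi ρ α k n) * ENNReal.ofReal (v 0) := by
      simp only [ENNReal.tsum_mul_left, ENNReal.tsum_mul_right]
      ring

theorem stability_from_geometric_ratio
    {Ω : Type*} [MeasurableSpace Ω] (P : Measure Ω) [IsProbabilityMeasure P]
    (ρ α : ℝ) (hρ : ρ ∈ Set.Ioo (0 : ℝ) 1) (hα : 0 < α)
    (v : ℕ → Ω → ℝ) (k : ℕ → Ω → ℕ)
    (hvmeas : ∀ t, Measurable (v t)) (hkmeas : ∀ n, Measurable (k n))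
    (hvnn : ∀ t ω, 0 ≤ v t ω)
    (hae : ∀ᵐ ω ∂P, StrictMono (fun n => k n ω) ∧ k 0 ω = 0 ∧
      IsCycleLyapunov ρ α (fun n => k n ω) (fun t => v t ω))
    (hindep : ProbabilityTheory.Indep
      (MeasurableSpace.comap (v 0) inferInstance)
      (⨆ n : ℕ, MeasurableSpace.comap (fun ω => k (n + 1) ω - k n ω) inferInstance) P)
    (hv0 : (∫⁻ ω, ENNReal.ofReal (v 0 ω) ∂P) < ⊤)
    (Ω' : ℝ) (hΩ' : Ω' < 1)
    (hXi1 : (∫⁻ ω, ENNReal.ofReal (Xi ρ α (fun m => k m ω) 1) ∂P) < ⊤)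
    (hratio : ∀ n : ℕ, 1 ≤ n →
      (∫⁻ ω, ENNReal.ofReal (Xi ρ α (fun m => k m ω) (n + 1)) ∂P) ≤
        ENNReal.ofReal Ω' * ∫⁻ ω, ENNReal.ofReal (Xi ρ α (fun m => k m ω) n) ∂P) :
    (∑' t : ℕ, ∫⁻ ω, ENNReal.ofReal (v t ω) ∂P) < ⊤ := by
  have hSmeasM : ∀ n, Measurable[⨆ n : ℕ,
      MeasurableSpace.comap (fun ω => k (n + 1) ω - k n ω) inferInstance]
      (fun ω => ∑ i ∈ Finset.range n, (k (i + 1) ω - k i ω - 1)) := by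
    intro n
    apply Finset.measurable_sum
    intro i _
    have hΔ : Measurable[⨆ n : ℕ,
        MeasurableSpace.comap (fun ω => k (n + 1) ω - k n ω) inferInstance]
        (fun ω => k (i + 1) ω - k i ω) :=
      Measurable.of_comap_le
        (le_iSup (fun m => MeasurableSpace.comap (fun ω => k (m + 1) ω - k m ω) inferInstance) i)
    exact hΔ.sub measurable_const
  have hXimeasM : ∀ n, Measurable[⨆ n : ℕ,
      MeasurableSpace.comap (fun ω => k (n + 1) ω - k n ω) inferInstance]
      (fun ω => Xi ρ α (fun m => k m ω) n) := by
    intro n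
    exact (measurable_from_nat (f := fun s : ℕ => α ^ n * ρ ^ s)).comp (hSmeasM n)
  have hXimeas : ∀ n, Measurable (fun ω => Xi ρ α (fun m => k m ω) n) := by
    intro n
    have hS : Measurable (fun ω => ∑ i ∈ Finset.range n, (k (i + 1) ω - k i ω - 1)) := by
      apply Finset.measurable_sum
      intro i _
      exact ((hkmeas (i + 1)).sub (hkmeas i)).sub measurable_const
    exact (measurable_from_nat (f := fun s : ℕ => α ^ n * ρ ^ s)).comp hS
  have hM_le : (⨆ n : ℕ,
      MeasurableSpace.comap (fun ω => k (n + 1) ω - k n ω) inferInstance) ≤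
      (inferInstance : MeasurableSpace Ω) :=
    iSup_le fun n => ((hkmeas (n + 1)).sub (hkmeas n)).comap_le
  have hv0_le : MeasurableSpace.comap (v 0) inferInstance ≤
      (inferInstance : MeasurableSpace Ω) :=
    (hvmeas 0).comap_le
  -- product rule from independence
  have hprod : ∀ n, (∫⁻ ω, ENNReal.ofReal (Xi ρ α (fun m => k m ω) n) *
      ENNReal.ofReal (v 0 ω) ∂P) =
      (∫⁻ ω, ENNReal.ofReal (Xi ρ α (fun m => k m ω) n) ∂P) *
        ∫⁻ ω, ENNReal.ofReal (v 0 ω) ∂P := by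
    intro n
    refine ProbabilityTheory.lintegral_mul_eq_lintegral_mul_lintegral_of_independent_measurableSpace
      hM_le hv0_le hindep.symm ?_ ?_
    · exact ENNReal.measurable_ofReal.comp (hXimeasM n)
    · exact ENNReal.measurable_ofReal.comp (Measurable.of_comap_le le_rfl)
  set I : ℕ → ℝ≥0∞ := fun n => ∫⁻ ω, ENNReal.ofReal (Xi ρ α (fun m => k m ω) n) ∂P with hI
  have hI0 : I 0 = 1 := by
    simp [hI, Xi, lintegral_const]
  have hIb : ∀ m, I (m + 1) ≤ ENNReal.ofReal Ω' ^ m * I 1 := by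
    intro m
    induction m with
    | zero => simp
    | succ m ih =>
      calc I (m + 2) ≤ ENNReal.ofReal Ω' * I (m + 1) := hratio (m + 1) (by omega)
        _ ≤ ENNReal.ofReal Ω' * (ENNReal.ofReal Ω' ^ m * I 1) := mul_le_mul_right ih _
        _ = ENNReal.ofReal Ω' ^ (m + 1) * I 1 := by ring
  have hrΩ : ENNReal.ofReal Ω' < 1 := ENNReal.ofReal_lt_one.mpr hΩ'
  have hIsum : ∑' n, I n < ⊤ := by
    rw [tsum_eq_zero_add' ENNReal.summable, hI0]
    have h1 : ∑' m, I (m + 1) ≤ (1 - ENNReal.ofReal Ω')⁻¹ * I 1 := by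
      calc ∑' m, I (m + 1) ≤ ∑' m, ENNReal.ofReal Ω' ^ m * I 1 := ENNReal.tsum_le_tsum hIb
        _ = (1 - ENNReal.ofReal Ω')⁻¹ * I 1 := by
          rw [ENNReal.tsum_mul_right, ENNReal.tsum_geometric]
    have h2 : (1 - ENNReal.ofReal Ω')⁻¹ < ⊤ :=
      ENNReal.inv_lt_top.mpr (tsub_pos_iff_lt.mpr hrΩ)
    exact ENNReal.add_lt_top.mpr ⟨ENNReal.one_lt_top,
      lt_of_le_of_lt h1 (ENNReal.mul_lt_top h2 hXi1)⟩
  set G : ℝ≥0∞ := ∑' j : ℕ, ENNReal.ofReal ρ ^ j with hG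
  have hGlt : G < ⊤ := by
    rw [hG, ENNReal.tsum_geometric]
    exact ENNReal.inv_lt_top.mpr (tsub_pos_iff_lt.mpr (ENNReal.ofReal_lt_one.mpr hρ.2))
  have hmeasT : Measurable (fun ω => ∑' n, ENNReal.ofReal (Xi ρ α (fun m => k m ω) n) *
      ENNReal.ofReal (v 0 ω)) :=
    Measurable.ennreal_tsum fun n => ((hXimeas n).ennreal_ofReal).mul ((hvmeas 0).ennreal_ofReal)
  calc ∑' t : ℕ, ∫⁻ ω, ENNReal.ofReal (v t ω) ∂P
      = ∫⁻ ω, ∑' t, ENNReal.ofReal (v t ω) ∂P :=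
        (lintegral_tsum fun t => ((hvmeas t).ennreal_ofReal).aemeasurable).symm
    _ ≤ ∫⁻ ω, (ENNReal.ofReal (v 0 ω) + (G * ENNReal.ofReal α) *
        ∑' n, ENNReal.ofReal (Xi ρ α (fun m => k m ω) n) * ENNReal.ofReal (v 0 ω)) ∂P := by
      refine lintegral_mono_ae (hae.mono fun ω hω => ?_)
      exact pointwise_sum_le hρ.1 hρ.2 hα hω.1 hω.2.1 hω.2.2
    _ = (∫⁻ ω, ENNReal.ofReal (v 0 ω) ∂P) + (G * ENNReal.ofReal α) *
        ∫⁻ ω, (∑' n, ENNReal.ofReal (Xi ρ α (fun m => k m ω) n) *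
          ENNReal.ofReal (v 0 ω)) ∂P := by
      rw [lintegral_add_left ((hvmeas 0).ennreal_ofReal), lintegral_const_mul _ hmeasT]
    _ = (∫⁻ ω, ENNReal.ofReal (v 0 ω) ∂P) + (G * ENNReal.ofReal α) *
        ((∑' n, I n) * ∫⁻ ω, ENNReal.ofReal (v 0 ω) ∂P) := by
      rw [lintegral_tsum (f := fun n ω => ENNReal.ofReal (Xi ρ α (fun m => k m ω) n) *
          ENNReal.ofReal (v 0 ω)) fun n =>
        (((hXimeas n).ennreal_ofReal).mul ((hvmeas 0).ennreal_ofReal)).aemeasurable]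
      rw [tsum_congr hprod, ENNReal.tsum_mul_right]
    _ < ⊤ := by
      refine ENNReal.add_lt_top.mpr ⟨hv0, ?_⟩
      exact ENNReal.mul_lt_top (ENNReal.mul_lt_top hGlt ENNReal.ofReal_lt_top)
        (ENNReal.mul_lt_top hIsum hv0)
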